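/- Let b ≥ 2 and k ≥ 1 be integers. A positive integer d divides every element of S_k^b if and only if d divides E_k = gcd((b^k − 1)/(b − 1), k). In other words, the greatest common divisor of the set S_k^b of base-b k'th powers equals E_k. -/

import Mathlib

/-- `ckb b k n = 1 + b^n + b^(2n) + ⋯ + b^((k-1)n)`, i.e., `(b^(kn) - 1)/(b^n - 1)` for `n ≥ 1`. -/
def ckb (b k n : ℕ) : ℕ := ∑ i ∈ Finset.range k, b ^ (i * n)

/-- `m` is a base-`b` `k`'th power: `m = a * ckb b k n` for some `n ≥ 1` and
`b^(n-1) ≤ a < b^n`. -/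
def IsBaseKthPower (b k m : ℕ) : Prop :=
  ∃ n a : ℕ, 1 ≤ n ∧ b ^ (n - 1) ≤ a ∧ a < b ^ n ∧ m = a * ckb b k n

/-- Splitting a geometric sum of length `a * c`. -/
lemma geomS_split (x a c : ℕ) :
    ∑ i ∈ Finset.range (a * c), x ^ i
      = (∑ j ∈ Finset.range a, (x ^ c) ^ j) * (∑ r ∈ Finset.range c, x ^ r) := by
  induction a with
  | zero => simp
  | succ a ih =>
    rw [Nat.succ_mul, Finset.sum_range_add, ih, Finset.sum_range_succ, add_mul]
    congr 1
    rw [Finset.mul_sum, ← pow_mul]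
    exact Finset.sum_congr rfl fun r _ => by rw [← pow_add]; congr 1; ring

/-- `(∑_{i<m} x^i) * (x - 1) = x^m - 1` in `ℕ` for `x ≥ 1`. -/
lemma geomS_mul_pred (x m : ℕ) (hx : 1 ≤ x) :
    (∑ i ∈ Finset.range m, x ^ i) * (x - 1) = x ^ m - 1 := by
  induction m with
  | zero => simp
  | succ m ih =>
    rw [Finset.sum_range_succ, add_mul, ih, pow_succ, Nat.mul_sub, mul_one]
    have h1 : 1 ≤ x ^ m := Nat.one_le_pow _ _ hx
    have h2 : x ^ m ≤ x ^ m * x := Nat.le_mul_of_pos_right _ hx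
    omega

/-- If `p ∣ x - 1`, `x ≥ 1`, then `p ∣ 1 + x + ⋯ + x^(p-1)`. -/
lemma prime_dvd_geomS {p x : ℕ} (hx : 1 ≤ x) (h : p ∣ x - 1) :
    p ∣ ∑ i ∈ Finset.range p, x ^ i := by
  rw [← ZMod.natCast_eq_zero_iff]
  have hx1 : ((x : ℕ) : ZMod p) = 1 := by
    have hmod : 1 ≡ x [MOD p] := (Nat.modEq_iff_dvd' hx).mpr h
    have := (ZMod.natCast_eq_natCast_iff 1 x p).mpr hmod
    simpa using this.symm
  push_cast
  rw [hx1]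
  simp [Finset.sum_const, Finset.card_range]

/-- If every prime of `d` divides `x - 1` and `d ∣ m`, then `d` divides the geometric sum. -/
lemma dvd_geomS_of_rad :
    ∀ d x m : ℕ, 1 ≤ x → (∀ p : ℕ, p.Prime → p ∣ d → p ∣ x - 1) → d ∣ m →
      d ∣ ∑ i ∈ Finset.range m, x ^ i := by
  intro d
  induction d using Nat.strong_induction_on with
  | _ d ih =>
    intro x m hx hrad hdm
    rcases Nat.eq_zero_or_pos d with rfl | hd0
    · obtain rfl : m = 0 := Nat.eq_zero_of_zero_dvd hdm
      simp
    rcases eq_or_ne d 1 with rfl | hd1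
    · exact one_dvd _
    set p := d.minFac with hp_def
    have hp : p.Prime := Nat.minFac_prime hd1
    have hpd : p ∣ d := Nat.minFac_dvd d
    have hpx : p ∣ x - 1 := hrad p hp hpd
    have hpm : p ∣ m := hpd.trans hdm
    obtain ⟨d', hd'⟩ := hpd
    obtain ⟨t, ht⟩ := hdm
    have hm' : m = (d' * t) * p := by rw [ht, hd']; ring
    rw [hm', geomS_split]
    have hxp : 1 ≤ x ^ p := Nat.one_le_pow _ _ hx
    rcases Nat.eq_zero_or_pos d' with rfl | h0
    · simp at hd'; omega
    have h2d : 2 * d' ≤ p * d' := Nat.mul_le_mul_right d' hp.two_le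
    have hd'lt : d' < d := by rw [hd']; omega
    have hrad' : ∀ q : ℕ, q.Prime → q ∣ d' → q ∣ x ^ p - 1 := by
      intro q hq hqd'
      have hqx : q ∣ x - 1 := hrad q hq (by rw [hd']; exact hqd'.mul_left p)
      exact hqx.trans (by simpa using Nat.sub_dvd_pow_sub_pow x 1 p)
    have h1 : d' ∣ ∑ j ∈ Finset.range (d' * t), (x ^ p) ^ j :=
      ih d' hd'lt (x ^ p) (d' * t) hxp hrad' (Dvd.intro t rfl)
    have h2 : p ∣ ∑ r ∈ Finset.range p, x ^ r := prime_dvd_geomS hx hpx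
    rw [hd', mul_comm p d']
    exact mul_dvd_mul h1 h2

/-- The key divisibility lemma: if `d ∣ 1 + b + ⋯ + b^(k-1)` and `d ∣ k`,
then `d` divides `1 + b^n + ⋯ + b^((k-1)n)`. -/
lemma key_dvd (b k d n : ℕ) (hb : 2 ≤ b)
    (h1 : d ∣ ∑ i ∈ Finset.range k, b ^ i) (h2 : d ∣ k) (hn : 1 ≤ n) :
    d ∣ ∑ i ∈ Finset.range k, (b ^ n) ^ i := by
  rw [Nat.dvd_iff_prime_pow_dvd_dvd]
  intro p e hp hpe
  have hx : 1 ≤ b ^ n := Nat.one_le_pow _ _ (by omega)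
  by_cases hcase : p ∣ b ^ n - 1
  · refine dvd_geomS_of_rad (p ^ e) (b ^ n) k hx ?_ (hpe.trans h2)
    intro q hq hqd
    have : q = p := (Nat.prime_dvd_prime_iff_eq hq hp).mp (hq.dvd_of_dvd_pow hqd)
    rwa [this]
  · have hco : Nat.Coprime (p ^ e) (b ^ n - 1) :=
      Nat.Coprime.pow_left e ((Nat.Prime.coprime_iff_not_dvd hp).mpr hcase)
    have hSb : (∑ i ∈ Finset.range k, b ^ i) ∣ b ^ k - 1 :=
      ⟨b - 1, (geomS_mul_pred b k (by omega)).symm⟩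
    have hbk : b ^ k - 1 ∣ (b ^ n) ^ k - 1 := by
      have : (b ^ n) ^ k = (b ^ k) ^ n := by rw [← pow_mul, ← pow_mul, mul_comm]
      rw [this]
      simpa using Nat.sub_dvd_pow_sub_pow (b ^ k) 1 n
    have hdvd : p ^ e ∣ (∑ i ∈ Finset.range k, (b ^ n) ^ i) * (b ^ n - 1) := by
      rw [geomS_mul_pred (b ^ n) k hx]
      exact (hpe.trans h1).trans (hSb.trans hbk)
    exact hco.dvd_of_dvd_mul_right hdvd

theorem gcd_baseKthPowers (b k : ℕ) (hb : 2 ≤ b) (hk : 1 ≤ k) (d : ℕ) (hd : 0 < d) :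
    (∀ m : ℕ, IsBaseKthPower b k m → d ∣ m) ↔ d ∣ Nat.gcd ((b ^ k - 1) / (b - 1)) k := by
  have hckb : ∀ n : ℕ, ckb b k n = ∑ i ∈ Finset.range k, (b ^ n) ^ i := by
    intro n
    exact Finset.sum_congr rfl fun i _ => by rw [mul_comm, pow_mul]
  have hA : (b ^ k - 1) / (b - 1) = ∑ i ∈ Finset.range k, b ^ i :=
    (Nat.geomSum_eq hb k).symm
  have hckb1 : ckb b k 1 = ∑ i ∈ Finset.range k, b ^ i := by
    simpa using hckb 1
  constructor
  · intro h
    rw [hA]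
    refine Nat.dvd_gcd ?_ ?_
    · -- d ∣ 1 + b + ⋯ + b^(k-1), from the element with n = 1, a = 1
      have := h (1 * ckb b k 1) ⟨1, 1, le_refl 1, by simp, by simpa using (by omega : 1 < b), rfl⟩
      rwa [one_mul, hckb1] at this
    · -- d ∣ k, from consecutive elements with n = 2k
      have hdA : d ∣ ∑ i ∈ Finset.range k, b ^ i := by
        have := h (1 * ckb b k 1) ⟨1, 1, le_refl 1, by simp, by simpa using (by omega : 1 < b), rfl⟩
        rwa [one_mul, hckb1] at this
      set P := b ^ (2 * k - 1) with hP
      set C := ckb b k (2 * k) with hC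
      have hPval : 2 ≤ P := le_trans hb (Nat.le_self_pow (by omega) b)
      have h2P : 2 * P ≤ b ^ (2 * k) := by
        have : b ^ (2 * k) = P * b := by
          rw [hP, ← pow_succ]
          congr 1
          omega
        calc 2 * P = P * 2 := by ring
          _ ≤ P * b := Nat.mul_le_mul_left P hb
          _ = b ^ (2 * k) := this.symm
      have hmem1 : IsBaseKthPower b k (P * C) :=
        ⟨2 * k, P, by omega, le_refl P, by
          rw [hP]; exact Nat.pow_lt_pow_right (by omega) (by omega), rfl⟩
      have hmem2 : IsBaseKthPower b k ((P + 1) * C) :=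
        ⟨2 * k, P + 1, by omega, by omega, by omega, rfl⟩
      have hdC : d ∣ C := by
        have h1 := h _ hmem1
        have h2 := h _ hmem2
        have := Nat.dvd_sub h2 h1
        rwa [add_mul, one_mul, Nat.add_sub_cancel_left] at this
      -- now C ≡ k  mod (b^k - 1), and d ∣ b^k - 1
      have hdbk : d ∣ b ^ k - 1 :=
        hdA.trans ⟨b - 1, (geomS_mul_pred b k (by omega)).symm⟩
      have hZd : (d : ℤ) ∣ (C : ℤ) - (k : ℤ) := by
        have hdbkZ : (d : ℤ) ∣ (b : ℤ) ^ k - 1 := by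
          have h1b : 1 ≤ b ^ k := Nat.one_le_pow _ _ (by omega)
          have := Int.natCast_dvd_natCast.mpr hdbk
          rwa [Nat.cast_sub h1b, Nat.cast_pow, Nat.cast_one] at this
        have hCk : (C : ℤ) - (k : ℤ)
            = ∑ i ∈ Finset.range k, (((b : ℤ) ^ (2 * k)) ^ i - 1) := by
          rw [Finset.sum_sub_distrib, Finset.sum_const, Finset.card_range, hC, hckb]
          push_cast
          ring
        rw [hCk]
        refine Finset.dvd_sum fun i _ => hdbkZ.trans ?_
        have step1 : (b : ℤ) ^ k - 1 ∣ (b : ℤ) ^ (2 * k) - 1 := by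
          have : ((b : ℤ) ^ k) - 1 ∣ ((b : ℤ) ^ k) ^ 2 - 1 ^ 2 :=
            sub_dvd_pow_sub_pow _ _ 2
          simpa [← pow_mul, mul_comm] using this
        have step2 : (b : ℤ) ^ (2 * k) - 1 ∣ ((b : ℤ) ^ (2 * k)) ^ i - 1 := by
          simpa using sub_dvd_pow_sub_pow ((b : ℤ) ^ (2 * k)) 1 i
        exact step1.trans step2
      have : (d : ℤ) ∣ (k : ℤ) := by
        have hdCZ : (d : ℤ) ∣ (C : ℤ) := Int.natCast_dvd_natCast.mpr hdC
        have := dvd_sub hdCZ hZd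
        simpa using this
      exact Int.natCast_dvd_natCast.mp this
  · intro h m hm
    obtain ⟨n, a, hn, _, _, rfl⟩ := hm
    have hdA : d ∣ ∑ i ∈ Finset.range k, b ^ i := by
      have := h.trans (Nat.gcd_dvd_left _ _)
      rwa [hA] at this
    have hdk : d ∣ k := h.trans (Nat.gcd_dvd_right _ _)
    have := key_dvd b k d n hb hdA hdk hn
    rw [← hckb n] at this
    exact this.mul_left a
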